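/- If A ∈ sp(V, Ω) satisfies A² = 0, then Aut(V, θ^A) = Sp(V, Ω)^A: every smooth diffeomorphism g: V → V satisfying Ω(g(z) − A(g(z)), Dg_z(v)) = Ω(z − Az, v) for all z, v ∈ V is a linear symplectic automorphism that commutes with A, and conversely every element of Sp(V, Ω) commuting with A preserves θ^A. -/

import Mathlib

open Filter Topology
open Filter Topology

-- aux 2: polynomial limit lemma
theorem poly_limit {V : Type*} [NormedAddCommGroup V] [NormedSpace ℝ V]
    (c₁ c₂ L : V) (ρ : ℝ → V) (hρ : Tendsto ρ atBot (𝓝 0))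
    (heq : ∀ t : ℝ, t • c₁ + (t^2) • c₂ + ρ t = L) :
    c₁ = 0 ∧ c₂ = 0 ∧ L = 0 := by
  have hρ' : ∀ t : ℝ, ρ t = L - t • c₁ - (t^2) • c₂ := by
    intro t; have := heq t; linear_combination (norm := module) this
  have hshift : ∀ a : ℝ, Tendsto (fun t => ρ (t + a)) atBot (𝓝 0) :=
    fun a => hρ.comp (tendsto_atBot_add_const_right _ a tendsto_id)
  have h2 : Tendsto (fun t => ρ t - 2 • ρ (t+1) + ρ (t+2)) atBot (𝓝 0) := by
    have := (hρ.sub ((hshift 1).const_smul (2:ℕ))).add (hshift 2)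
    simpa using this
  have h2' : (fun t : ℝ => ρ t - 2 • ρ (t+1) + ρ (t+2)) = fun _ => (-2 : ℝ) • c₂ := by
    funext t; rw [hρ' t, hρ' (t+1), hρ' (t+2)]
    match_scalars <;> ring
  rw [h2'] at h2
  have hc₂ : c₂ = 0 := by
    have := tendsto_nhds_unique h2 tendsto_const_nhds
    have h := this
    simpa [neg_smul, smul_eq_zero] using h
  have h1 : Tendsto (fun t => ρ t - ρ (t+1)) atBot (𝓝 0) := by
    simpa using hρ.sub (hshift 1)
  have h1' : (fun t : ℝ => ρ t - ρ (t+1)) = fun _ => c₁ := by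
    funext t; rw [hρ' t, hρ' (t+1), hc₂]
    match_scalars <;> ring
  rw [h1'] at h1
  have hc₁ : c₁ = 0 := (tendsto_nhds_unique h1 tendsto_const_nhds).symm
  have hL : Tendsto (fun _ : ℝ => L) atBot (𝓝 0) :=
    hρ.congr (fun t => by rw [hρ' t, hc₁, hc₂]; simp)
  exact ⟨hc₁, hc₂, tendsto_nhds_unique tendsto_const_nhds hL⟩

-- aux 1: quadratic Taylor bound near 0 for a C^∞ function
theorem quad_bound {V W : Type*} [NormedAddCommGroup V] [NormedSpace ℝ V]
    [NormedAddCommGroup W] [NormedSpace ℝ W]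
    [FiniteDimensional ℝ V] (f : V → W) (hf : ContDiff ℝ (⊤ : ℕ∞) f) :
    ∃ C : ℝ, 0 ≤ C ∧ ∀ w : V, ‖w‖ ≤ 1 → ‖f w - f 0 - fderiv ℝ f 0 w‖ ≤ C * ‖w‖^2 := by
  set G := fderiv ℝ f with hGdef
  have hfd : Differentiable ℝ f := hf.differentiable (by simp)
  have hG : ContDiff ℝ (⊤ : ℕ∞) G := hf.fderiv_right (by exact_mod_cast le_top)
  have hGd : Differentiable ℝ G := hG.differentiable (by simp)
  have hG2c : Continuous (fderiv ℝ G) := (hG.fderiv_right (m := 0) (by exact_mod_cast le_top)).continuous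
  obtain ⟨C, hC⟩ := (isCompact_closedBall (0:V) 1).exists_bound_of_continuousOn
    (f := fderiv ℝ G) (hG2c.continuousOn)
  set C' := max C 0 with hC'def
  have hC'0 : 0 ≤ C' := le_max_right _ _
  have hC' : ∀ x ∈ Metric.closedBall (0:V) 1, ‖fderiv ℝ G x‖ ≤ C' :=
    fun x hx => (hC x hx).trans (le_max_left _ _)
  -- G is C'-Lipschitz on the unit ball
  have hGlip : ∀ x ∈ Metric.closedBall (0:V) 1, ‖G x - G 0‖ ≤ C' * ‖x‖ := by
    intro x hx
    have := (convex_closedBall (0:V) 1).norm_image_sub_le_of_norm_hasFDerivWithin_le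
      (fun y hy => ((hGd y).hasFDerivAt).hasFDerivWithinAt) hC'
      (Metric.mem_closedBall_self (by norm_num)) hx
    simpa using this
  refine ⟨C', hC'0, fun w hw => ?_⟩
  have hsub : Metric.closedBall (0:V) ‖w‖ ⊆ Metric.closedBall (0:V) 1 :=
    Metric.closedBall_subset_closedBall hw
  have hmvt := (convex_closedBall (0:V) ‖w‖).norm_image_sub_le_of_norm_hasFDerivWithin_le
    (f := fun x => f x - f 0 - G 0 x) (f' := fun x => G x - G 0) (C := C' * ‖w‖)
    (fun y hy => (((hfd y).hasFDerivAt.sub_const (f 0)).sub ((G 0).hasFDerivAt)).hasFDerivWithinAt)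
    (fun y hy => by
      have h1 := hGlip y (hsub hy)
      have h2 : ‖y‖ ≤ ‖w‖ := by simpa using hy
      calc ‖G y - G 0‖ ≤ C' * ‖y‖ := h1
        _ ≤ C' * ‖w‖ := by gcongr)
    (Metric.mem_closedBall_self (norm_nonneg w))
    (by simpa using Metric.mem_closedBall_self (norm_nonneg w) : w ∈ Metric.closedBall (0:V) ‖w‖)
  simp only [map_zero, sub_zero, sub_self, zero_sub] at hmvt
  calc ‖f w - f 0 - G 0 w‖ ≤ C' * ‖w‖ * ‖w‖ := hmvt
    _ = C' * ‖w‖^2 := by ring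

set_option maxHeartbeats 2000000 in
theorem stmt_17 {V : Type*} [NormedAddCommGroup V] [NormedSpace ℝ V] [FiniteDimensional ℝ V]
    (Ω : V →ₗ[ℝ] V →ₗ[ℝ] ℝ)
    (hΩalt : ∀ x : V, Ω x x = 0)
    (hΩnd : ∀ x : V, (∀ y : V, Ω x y = 0) → x = 0)
    (A : V →ₗ[ℝ] V) (hA : ∀ x y : V, Ω (A x) y + Ω x (A y) = 0)
    (hA2 : A ∘ₗ A = 0)
    (g ginv : V → V) (hg : ContDiff ℝ (⊤ : ℕ∞) g) (hginv : ContDiff ℝ (⊤ : ℕ∞) ginv)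
    (hli : Function.LeftInverse ginv g) (hri : Function.RightInverse ginv g) :
    (∀ z v : V, Ω (g z - A (g z)) (fderiv ℝ g z v) = Ω (z - A z) v) ↔
      (IsLinearMap ℝ g ∧ (∀ x y : V, Ω (g x) (g y) = Ω x y) ∧
        ∀ z : V, g (A z) = A (g z)) := by
  have hA2' : ∀ x : V, A (A x) = 0 := fun x => by
    have := LinearMap.ext_iff.1 hA2 x
    simpa using this
  have hskew : ∀ x y : V, Ω x y = - Ω y x := by
    intro x y
    have h := hΩalt (x + y)
    simp only [map_add, LinearMap.add_apply, hΩalt] at h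
    linarith
  have hAW : ∀ x y : V, Ω (A x) y = - Ω x (A y) := fun x y => by linarith [hA x y]
  constructor
  · intro H
    classical
    -- continuous linear versions of A and Ω
    set Ac : V →L[ℝ] V := LinearMap.toContinuousLinearMap A with hAcdef
    have hAc : ∀ x, Ac x = A x := fun x => rfl
    set Ω₂ : V →ₗ[ℝ] (V →L[ℝ] ℝ) :=
      { toFun := fun x => LinearMap.toContinuousLinearMap (Ω x)
        map_add' := by intro x y; ext w; simp
        map_smul' := by intro c x; ext w; simp } with hΩ₂def
    set Ωc : V →L[ℝ] V →L[ℝ] ℝ := LinearMap.toContinuousLinearMap Ω₂ with hΩcdef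
    have hΩc : ∀ x y, Ωc x y = Ω x y := fun x y => rfl
    have hgd : Differentiable ℝ g := hg.differentiable (by simp)
    set G := fderiv ℝ g with hGdef
    have hG : ContDiff ℝ (⊤ : ℕ∞) G := hg.fderiv_right (by exact_mod_cast le_top)
    have hGd : Differentiable ℝ G := hG.differentiable (by simp)
    set G2 := fderiv ℝ G with hG2def
    have hginvd : Differentiable ℝ ginv := hginv.differentiable (by simp)
    -- the derivative of g is everywhere surjective
    have hGsurj : ∀ z : V, Function.Surjective (G z) := by
      intro z
      have h1 : fderiv ℝ (g ∘ ginv) (g z) = (G (ginv (g z))).comp (fderiv ℝ ginv (g z)) :=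
        fderiv_comp (g z) (hgd _) (hginvd _)
      rw [show (g ∘ ginv) = id from funext hri, fderiv_id, hli z] at h1
      intro y
      refine ⟨fderiv ℝ ginv (g z) y, ?_⟩
      have := congrArg (fun (T : V →L[ℝ] V) => T y) h1.symm
      simpa using this
    -- Step 1: differentiating the hypothesis
    have hstar : ∀ z u v : V,
        Ω (G z u - A (G z u)) (G z v) + Ω (g z - A (g z)) (G2 z u v) = Ω (u - A u) v := by
      intro z u v
      have hl : ∀ t : ℝ, HasDerivAt (fun s : ℝ => z + s • u) u t := by
        intro t
        simpa using ((hasDerivAt_id t).smul_const u).const_add z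
      have hp : ∀ t : ℝ, HasDerivAt (fun s : ℝ => g (z + s • u)) (G (z + t • u) u) t :=
        fun t => ((hgd _).hasFDerivAt).comp_hasDerivAt t (hl t)
      have hq : ∀ t : ℝ, HasDerivAt (fun s : ℝ => G (z + s • u)) (G2 (z + t • u) u) t :=
        fun t => ((hGd _).hasFDerivAt).comp_hasDerivAt t (hl t)
      have hqv : HasDerivAt (fun s : ℝ => G (z + s • u) v) (G2 z u v) 0 := by
        have := (hq 0).clm_apply (hasDerivAt_const 0 v)
        simpa using this
      have hr : HasDerivAt (fun s : ℝ => g (z + s • u) - Ac (g (z + s • u)))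
          (G z u - Ac (G z u)) 0 := by
        have := (hp 0).sub ((Ac.hasFDerivAt).comp_hasDerivAt 0 (hp 0))
        simpa [Function.comp_def, Pi.sub_def] using this
      have hc : HasDerivAt (fun s : ℝ => Ωc (g (z + s • u) - Ac (g (z + s • u))))
          (Ωc (G z u - Ac (G z u))) 0 := (Ωc.hasFDerivAt).comp_hasDerivAt 0 hr
      have hLHS : HasDerivAt
          (fun s : ℝ => Ωc (g (z + s • u) - Ac (g (z + s • u))) (G (z + s • u) v))
          (Ωc (G z u - Ac (G z u)) (G z v) + Ωc (g z - Ac (g z)) (G2 z u v)) 0 := by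
        have := hc.clm_apply hqv
        simpa using this
      have hRHS : HasDerivAt (fun s : ℝ => Ωc (z + s • u - Ac (z + s • u)) v)
          (Ωc (u - Ac u) v) 0 := by
        have hr2 : HasDerivAt (fun s : ℝ => z + s • u - Ac (z + s • u)) (u - Ac u) 0 := by
          have := (hl 0).sub ((Ac.hasFDerivAt).comp_hasDerivAt 0 (hl 0))
          simpa [Function.comp_def, Pi.sub_def] using this
        have := ((Ωc.hasFDerivAt).comp_hasDerivAt 0 hr2).clm_apply (hasDerivAt_const 0 v)
        simpa using this
      have hfun : (fun s : ℝ => Ωc (g (z + s • u) - Ac (g (z + s • u))) (G (z + s • u) v))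
          = (fun s : ℝ => Ωc (z + s • u - Ac (z + s • u)) v) := by
        funext s
        have := H (z + s • u) v
        simpa [hΩc, hAc] using this
      rw [hfun] at hLHS
      have huniq := hLHS.unique hRHS
      simpa [hΩc, hAc] using huniq
    have hsymm2 : ∀ z u v : V, G2 z u v = G2 z v u := fun z u v =>
      second_derivative_symmetric (fun y => (hgd y).hasFDerivAt) ((hGd z).hasFDerivAt) u v
    -- pointwise symplecticity of the derivative
    have hsymp0 : ∀ z u v : V, Ω (G z u) (G z v) = Ω u v := by
      intro z u v
      have h1 := hstar z u v
      have h2 := hstar z v u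
      rw [hsymm2 z v u] at h2
      simp only [map_sub, LinearMap.sub_apply] at h1 h2
      have e1 := hAW (G z u) (G z v)
      have e2 := hAW u v
      have e3 := hskew (G z v) (G z u)
      have e4 := hskew v u
      have e5 := hskew (A (G z v)) (G z u)
      have e6 := hskew (A v) u
      linarith
    -- Step 2: the Liouville vector field identity
    have hkey : ∀ z : V, G z (z - A z) = g z - A (g z) := by
      intro z
      have hx : ∀ y : V, Ω (g z - A (g z) - G z (z - A z)) y = 0 := by
        intro y
        obtain ⟨v, rfl⟩ := hGsurj z y
        have h1 := H z v
        have h2 := hsymp0 z (z - A z) v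
        simp only [map_sub, LinearMap.sub_apply] at h1 h2 ⊢
        linarith
      have h0 := hΩnd _ hx
      exact (sub_eq_zero.mp h0).symm
    -- Step 3: g 0 = 0
    have hg0 : g 0 = 0 := by
      have h := hkey 0
      simp only [map_zero, sub_zero, sub_self] at h
      -- h : G 0 0 = g 0 - A (g 0)  with 0 - A 0 = 0
      have h' : (0 : V) = g 0 - A (g 0) := by simpa using h
      have h2 : A (g 0) = 0 := by
        have := congrArg A h'
        simpa [map_sub, hA2'] using this.symm
      have := h'
      rw [h2, sub_zero] at this
      exact this.symm
    -- Step 4: the flow e^{tB} and conservation of g along it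
    have heB : ∀ (t : ℝ) (y : V), Real.exp t • ((y - A y) - t • A (y - A y))
        = Real.exp t • (y - t • A y) - A (Real.exp t • (y - t • A y)) := by
      intro t y
      simp only [map_sub, map_smul, hA2', smul_zero, sub_zero]
      module
    have hederiv : ∀ (t : ℝ) (y : V),
        HasDerivAt (fun s : ℝ => Real.exp s • (y - s • A y))
          (Real.exp t • ((y - A y) - t • A (y - A y))) t := by
      intro t y
      have h1 : HasDerivAt (fun s : ℝ => y - s • A y) (-(A y)) t := by
        simpa [Pi.sub_def] using (hasDerivAt_const t y).sub ((hasDerivAt_id t).smul_const (A y))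
      have h2 := (Real.hasDerivAt_exp t).smul h1
      refine h2.congr_deriv ?_
      simp only [map_sub, map_smul, hA2', smul_zero, sub_zero]
      module
    have hflow : ∀ (z : V) (t : ℝ),
        Real.exp (-t) • (g (Real.exp t • (z - t • A z))
          + t • A (g (Real.exp t • (z - t • A z)))) = g z := by
      intro z
      have hwd : ∀ t : ℝ, HasDerivAt (fun s : ℝ => g (Real.exp s • (z - s • A z)))
          (g (Real.exp t • (z - t • A z)) - A (g (Real.exp t • (z - t • A z)))) t := by
        intro t
        have h1 := ((hgd _).hasFDerivAt).comp_hasDerivAt t (hederiv t z)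
        have h2 : (G (Real.exp t • (z - t • A z)))
            (Real.exp t • ((z - A z) - t • A (z - A z)))
            = g (Real.exp t • (z - t • A z)) - A (g (Real.exp t • (z - t • A z))) := by
          rw [heB t z, hkey (Real.exp t • (z - t • A z))]
        rw [← h2]
        exact h1
      have hφd : ∀ t : ℝ, HasDerivAt (fun s : ℝ => Real.exp (-s) •
          (g (Real.exp s • (z - s • A z)) + s • Ac (g (Real.exp s • (z - s • A z))))) 0 t := by
        intro t
        set w : ℝ → V := fun s => g (Real.exp s • (z - s • A z)) with hwdef
        have hexp : HasDerivAt (fun s : ℝ => Real.exp (-s)) (-Real.exp (-t)) t := by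
          simpa [Function.comp_def] using (Real.hasDerivAt_exp (-t)).comp t (hasDerivAt_neg t)
        have hAw : HasDerivAt (fun s : ℝ => Ac (w s)) (Ac (w t - A (w t))) t :=
          (Ac.hasFDerivAt).comp_hasDerivAt t (hwd t)
        have hsA : HasDerivAt (fun s : ℝ => s • Ac (w s))
            (t • (Ac (w t - A (w t))) + (1 : ℝ) • Ac (w t)) t :=
          (hasDerivAt_id t).smul hAw
        have hin : HasDerivAt (fun s : ℝ => w s + s • Ac (w s))
            ((w t - A (w t)) + (t • (Ac (w t - A (w t))) + (1 : ℝ) • Ac (w t))) t :=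
          (hwd t).add hsA
        have hout := hexp.smul hin
        refine hout.congr_deriv ?_
        simp only [hAc, map_sub, hA2', sub_zero, one_smul]
        module
      have hconst : ∀ t : ℝ, (fun s : ℝ => Real.exp (-s) •
          (g (Real.exp s • (z - s • A z)) + s • Ac (g (Real.exp s • (z - s • A z))))) t
          = (fun s : ℝ => Real.exp (-s) •
          (g (Real.exp s • (z - s • A z)) + s • Ac (g (Real.exp s • (z - s • A z))))) 0 := by
        intro t
        apply is_const_of_deriv_eq_zero (fun s => (hφd s).differentiableAt)
        intro s
        exact (hφd s).deriv
      intro t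
      have := hconst t
      simp only [hAc] at this
      simpa [hg0] using this
    -- Step 5: the limit t → -∞ forces linearity
    set T : V →L[ℝ] V := G 0 with hTdef
    set a : ℝ := ‖Ac‖ with hadef
    have ha0 : (0:ℝ) ≤ a := norm_nonneg _
    obtain ⟨C, hC0, hCb⟩ := quad_bound g hg
    have hCb' : ∀ w : V, ‖w‖ ≤ 1 → ‖g w - T w‖ ≤ C * ‖w‖^2 := by
      intro w hw
      have := hCb w hw
      rwa [hg0, sub_zero] at this
    have hub : ∀ (t : ℝ) (x : V), ‖x - t • A x‖ ≤ (1 + |t| * a) * ‖x‖ := by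
      intro t x
      calc ‖x - t • A x‖ ≤ ‖x‖ + ‖t • A x‖ := norm_sub_le _ _
        _ = ‖x‖ + |t| * ‖Ac x‖ := by rw [norm_smul, Real.norm_eq_abs, hAc]
        _ ≤ ‖x‖ + |t| * (a * ‖x‖) := by gcongr; exact Ac.le_opNorm x
        _ = (1 + |t| * a) * ‖x‖ := by ring
    have hub' : ∀ (t : ℝ) (x : V), ‖x + t • A x‖ ≤ (1 + |t| * a) * ‖x‖ := by
      intro t x
      have := hub (-t) x
      simpa [neg_smul, sub_neg_eq_add, abs_neg] using this
    have hM : Tendsto (fun t : ℝ => Real.exp t * (1 + |t| * a)^3) atBot (𝓝 0) := by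
      have hP := Polynomial.tendsto_div_exp_atTop
        ((Polynomial.C (1:ℝ) + Polynomial.C a * Polynomial.X)^3)
      have h2 := hP.comp tendsto_neg_atBot_atTop
      refine Tendsto.congr' ?_ h2
      filter_upwards [eventually_le_atBot (0:ℝ)] with t ht
      have habs : |t| = -t := abs_of_nonpos ht
      simp only [Function.comp, Polynomial.eval_pow, Polynomial.eval_add, Polynomial.eval_mul,
        Polynomial.eval_C, Polynomial.eval_X, habs, Real.exp_neg, div_eq_mul_inv, inv_inv]
      ring
    have hone : ∀ t : ℝ, (1:ℝ) ≤ 1 + |t| * a := by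
      intro t
      nlinarith [abs_nonneg t]
    have hgT : ∀ z : V, g z = T z ∧ A (T z) = T (A z) := by
      intro z
      have halg : ∀ t : ℝ, Real.exp (-t) • (T (Real.exp t • (z - t • A z)) + t • A (T (Real.exp t • (z - t • A z))))
          = T z + t • (A (T z) - T (A z)) + t^2 • (-(A (T (A z)))) := by
        intro t
        have he : Real.exp (-t) * Real.exp t = 1 := by
          rw [← Real.exp_add]; simp
        simp only [map_smul, map_sub]
        match_scalars <;> (rw [Real.exp_neg]; field_simp) <;> try ring
      have heq : ∀ t : ℝ, t • (A (T z) - T (A z)) + t^2 • (-(A (T (A z))))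
          + Real.exp (-t) • ((g (Real.exp t • (z - t • A z)) - T (Real.exp t • (z - t • A z))) + t • A (g (Real.exp t • (z - t • A z)) - T (Real.exp t • (z - t • A z)))) = g z - T z := by
        intro t
        have h1 := hflow z t
        have h2 := halg t
        have h4 : Real.exp (-t) • (T (Real.exp t • (z - t • A z)) + t • A (T (Real.exp t • (z - t • A z))))
            + Real.exp (-t) • ((g (Real.exp t • (z - t • A z)) - T (Real.exp t • (z - t • A z))) + t • A (g (Real.exp t • (z - t • A z)) - T (Real.exp t • (z - t • A z))))
            = Real.exp (-t) • (g (Real.exp t • (z - t • A z)) + t • A (g (Real.exp t • (z - t • A z)))) := by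
          simp only [map_sub]
          module
        linear_combination (norm := module) h1 - h2 + h4
      have hu1 : ∀ t : ℝ, ‖Real.exp t • (z - t • A z)‖ ≤ ‖z‖ * (Real.exp t * (1 + |t| * a)^3) := by
        intro t
        rw [norm_smul, Real.norm_eq_abs, abs_of_pos (Real.exp_pos t)]
        have h1 := hub t z
        have h2 : (1 + |t| * a) * ‖z‖ ≤ (1 + |t| * a)^3 * ‖z‖ :=
          mul_le_mul_of_nonneg_right (le_self_pow₀ (hone t) (by norm_num)) (norm_nonneg z)
        nlinarith [Real.exp_pos t, norm_nonneg (z - t • A z)]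
      have hu0 : Tendsto (fun t : ℝ => ‖Real.exp t • (z - t • A z)‖) atBot (𝓝 0) := by
        refine squeeze_zero (fun t => norm_nonneg _) hu1 ?_
        simpa using hM.const_mul ‖z‖
      have hev : ∀ᶠ t in atBot, ‖Real.exp t • (z - t • A z)‖ ≤ 1 :=
        hu0.eventually (eventually_le_nhds one_pos)
      have hρb : ∀ᶠ t in atBot, ‖Real.exp (-t) • ((g (Real.exp t • (z - t • A z)) - T (Real.exp t • (z - t • A z))) + t • A (g (Real.exp t • (z - t • A z)) - T (Real.exp t • (z - t • A z))))‖
          ≤ (C * ‖z‖^2) * (Real.exp t * (1 + |t| * a)^3) := by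
        filter_upwards [hev] with t ht
        have hrC : ‖(g (Real.exp t • (z - t • A z)) - T (Real.exp t • (z - t • A z)))‖ ≤ C * ‖Real.exp t • (z - t • A z)‖^2 := hCb' _ ht
        have huB : ‖Real.exp t • (z - t • A z)‖ ≤ Real.exp t * ((1 + |t| * a) * ‖z‖) := by
          rw [norm_smul, Real.norm_eq_abs, abs_of_pos (Real.exp_pos t)]
          have := hub t z
          nlinarith [Real.exp_pos t]
        calc ‖Real.exp (-t) • ((g (Real.exp t • (z - t • A z)) - T (Real.exp t • (z - t • A z))) + t • A (g (Real.exp t • (z - t • A z)) - T (Real.exp t • (z - t • A z))))‖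
            = Real.exp (-t) * ‖(g (Real.exp t • (z - t • A z)) - T (Real.exp t • (z - t • A z))) + t • A (g (Real.exp t • (z - t • A z)) - T (Real.exp t • (z - t • A z)))‖ := by
              rw [norm_smul, Real.norm_eq_abs, abs_of_pos (Real.exp_pos (-t))]
          _ ≤ Real.exp (-t) * ((1 + |t| * a) * ‖(g (Real.exp t • (z - t • A z)) - T (Real.exp t • (z - t • A z)))‖) := by
              gcongr
              exact hub' t _
          _ ≤ Real.exp (-t) * ((1 + |t| * a) * (C * (Real.exp t * ((1 + |t| * a) * ‖z‖))^2)) := by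
              have h5 : ‖(g (Real.exp t • (z - t • A z)) - T (Real.exp t • (z - t • A z)))‖ ≤ C * (Real.exp t * ((1 + |t| * a) * ‖z‖))^2 :=
                le_trans hrC (mul_le_mul_of_nonneg_left
                  (pow_le_pow_left₀ (norm_nonneg _) huB 2) hC0)
              gcongr
          _ = (C * ‖z‖^2) * (Real.exp t * (1 + |t| * a)^3) := by
              rw [Real.exp_neg]
              field_simp
      have hρ0 : Tendsto (fun t : ℝ => Real.exp (-t) • ((g (Real.exp t • (z - t • A z)) - T (Real.exp t • (z - t • A z))) + t • A (g (Real.exp t • (z - t • A z)) - T (Real.exp t • (z - t • A z))))) atBot (𝓝 0) := by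
        refine squeeze_zero_norm' hρb ?_
        simpa using hM.const_mul (C * ‖z‖^2)
      obtain ⟨hc1, hc2, hL⟩ := poly_limit (A (T z) - T (A z)) (-(A (T (A z))))
        (g z - T z) _ hρ0 heq
      exact ⟨sub_eq_zero.mp hL, sub_eq_zero.mp hc1⟩
    refine ⟨⟨fun x y => ?_, fun c x => ?_⟩, fun x y => ?_, fun z => ?_⟩
    · rw [(hgT (x+y)).1, (hgT x).1, (hgT y).1, map_add]
    · rw [(hgT (c • x)).1, (hgT x).1, map_smul]
    · rw [(hgT x).1, (hgT y).1]
      exact hsymp0 0 x y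
    · rw [(hgT (A z)).1, (hgT z).1]
      exact ((hgT z).2).symm
  · rintro ⟨hlin, hsymp, hcomm⟩ z v
    have hgl : g = fun x => (LinearMap.toContinuousLinearMap (IsLinearMap.mk' g hlin) : V → V) x := by
      funext x; simp
    have hfd : fderiv ℝ g z v = g v := by
      rw [hgl, (LinearMap.toContinuousLinearMap (IsLinearMap.mk' g hlin)).fderiv]
    rw [hfd, ← hcomm z]
    simp only [map_sub, LinearMap.sub_apply, hsymp]
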